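/- Let $P(z)=\prod_{j=1}^{2m}(z-\alpha_j)$ be a monic polynomial such that $(-1)^mP(z)P(-z)=(2m+1)z^{2m}+(-1)^m\sum_{j=1}^m(z^{2m-2j}+z^{2m+2j})$. Then the power sums $s_{2k}=\sum_{j=1}^{2m}\alpha_j^{2k}$ satisfy $s_{2k}=-1$ for $k=1,2,\ldots,m-1$. -/

import Mathlib

open Finset Polynomial

theorem stmt11 (m : ℕ) (hm : 2 ≤ m) (α : Fin (2 * m) → ℂ)
    (hfact : C ((-1 : ℂ) ^ m) * ((∏ j, (X - C (α j))) * (∏ j, (X - C (α j))).comp (-X)) =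
      C ((2 * m + 1 : ℂ)) * X ^ (2 * m) +
        C ((-1 : ℂ) ^ m) * ∑ j ∈ Icc 1 m, (X ^ (2 * m - 2 * j) + X ^ (2 * m + 2 * j)))
    (s : ℕ → ℂ) (hs : ∀ μ, s μ = ∑ j, (α j) ^ μ) :
    ∀ k, 1 ≤ k → k ≤ m - 1 → s (2 * k) = -1 := by
  classical
  set β : Fin (2 * m) → ℂ := fun j => (α j) ^ 2 with hβ
  set R : ℂ[X] := ∏ j, (X - C (β j)) with hRdef
  -- Step A : the product is expand 2 R
  have hA : (∏ j, (X - C (α j))) * (∏ j, (X - C (α j))).comp (-X) = expand ℂ 2 R := by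
    rw [Polynomial.prod_comp, ← Finset.prod_mul_distrib]
    have hfac : ∀ j : Fin (2 * m), (X - C (α j)) * (X - C (α j)).comp (-X)
        = (-1) * expand ℂ 2 (X - C (β j)) := by
      intro j
      simp only [sub_comp, X_comp, C_comp, map_sub, expand_X, expand_C, hβ]
      rw [map_pow]
      ring
    rw [Finset.prod_congr rfl (fun j _ => hfac j), Finset.prod_mul_distrib,
      Finset.prod_const, ← map_prod, ← hRdef, Finset.card_univ, Fintype.card_fin]
    have : ((-1 : ℂ[X])) ^ (2 * m) = 1 := by
      rw [pow_mul]; norm_num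
    rw [this, one_mul]
  -- Step B : explicit form of expand 2 R
  have hone : (C ((-1 : ℂ) ^ m)) * (C ((-1 : ℂ) ^ m)) = 1 := by
    rw [← C_mul, ← pow_add]
    rw [Even.neg_one_pow ⟨m, rfl⟩, map_one]
  have hQ : expand ℂ 2 R = C ((-1 : ℂ) ^ m) * (C ((2 * m + 1 : ℂ)) * X ^ (2 * m)) +
      ∑ j ∈ Icc 1 m, (X ^ (2 * m - 2 * j) + X ^ (2 * m + 2 * j)) := by
    have h := congrArg (fun p => C ((-1 : ℂ) ^ m) * p) hfact
    rw [← mul_assoc, hone, one_mul, hA] at h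
    rw [h]
    linear_combination (∑ j ∈ Icc 1 m, (X ^ (2 * m - 2 * j) + X ^ (2 * m + 2 * j)) : ℂ[X]) * hone
  -- Step C : coefficients of R
  have hcoeff : ∀ i, 1 ≤ i → i ≤ m - 1 → R.coeff (2 * m - i) = 1 := by
    intro i hi1 hi2
    have h1 : R.coeff (2 * m - i) = (expand ℂ 2 R).coeff (2 * (2 * m - i)) :=
      (coeff_expand_mul' two_pos R _).symm
    rw [hQ, coeff_add, finset_sum_coeff] at h1
    simp only [coeff_C_mul, coeff_X_pow, coeff_add] at h1
    rw [if_neg (by omega)] at h1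
    rw [Finset.sum_eq_single_of_mem (m - i) (by simp; omega)
      (fun j hj hne => by
        simp only [mem_Icc] at hj
        rw [if_neg (by omega), if_neg (by omega)]; ring)] at h1
    rw [if_neg (by omega), if_pos (by omega)] at h1
    simpa using h1
  -- Step D : elementary symmetric values
  set E : ℕ → ℂ := fun i => (MvPolynomial.aeval β) (MvPolynomial.esymm (Fin (2 * m)) ℂ i)
    with hEdef
  have hE : ∀ i, 1 ≤ i → i ≤ m - 1 → E i = (-1) ^ i := by
    intro i hi1 hi2
    have hEe : E i = ∑ t ∈ Finset.powersetCard i (univ : Finset (Fin (2 * m))), ∏ j ∈ t, β j := by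
      show (MvPolynomial.aeval β) (MvPolynomial.esymm (Fin (2 * m)) ℂ i) = _
      rw [MvPolynomial.aeval_esymm_eq_multiset_esymm, Finset.esymm_map_val]
    have hRalt : R = ∏ j, (X + C ((fun j => -β j) j)) := by
      rw [hRdef]
      exact Finset.prod_congr rfl fun j _ => by rw [map_neg, sub_eq_add_neg]
    have hle : 2 * m - i ≤ #(univ : Finset (Fin (2 * m))) := by
      simp only [Finset.card_univ, Fintype.card_fin]
      omega
    have hv := Finset.prod_X_add_C_coeff (univ : Finset (Fin (2 * m))) (fun j => -β j) hle
    rw [← hRalt] at hv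
    rw [hcoeff i hi1 hi2] at hv
    have hcard : #(univ : Finset (Fin (2 * m))) - (2 * m - i) = i := by
      simp only [Finset.card_univ, Fintype.card_fin]
      omega
    rw [hcard] at hv
    have hterm : ∀ t ∈ Finset.powersetCard i (univ : Finset (Fin (2 * m))),
        ∏ j ∈ t, -β j = (-1) ^ i * ∏ j ∈ t, β j := by
      intro t ht
      rw [Finset.prod_congr rfl (fun j _ => (neg_one_mul (β j)).symm), Finset.prod_mul_distrib,
        Finset.prod_const, (Finset.mem_powersetCard.mp ht).2]
    rw [Finset.sum_congr rfl hterm, ← Finset.mul_sum, ← hEe] at hv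
    have h2 : ((-1 : ℂ)) ^ i * ((-1 : ℂ)) ^ i = 1 := by
      rw [← pow_add]; exact Even.neg_one_pow ⟨i, rfl⟩
    calc E i = ((-1 : ℂ)) ^ i * ((-1 : ℂ) ^ i * E i) := by rw [← mul_assoc, h2, one_mul]
      _ = (-1) ^ i := by rw [← hv, mul_one]
  -- power sums
  set P : ℕ → ℂ := fun k => (MvPolynomial.aeval β) (MvPolynomial.psum (Fin (2 * m)) ℂ k)
    with hPdef
  have hP : ∀ k, P k = s (2 * k) := by
    intro k
    rw [hPdef]
    simp only [MvPolynomial.psum, map_sum, map_pow, MvPolynomial.aeval_X, hβ, hs, ← pow_mul]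
  have hNewton : ∀ k, 0 < k → P k = (-1) ^ (k + 1) * k * E k -
      ∑ a ∈ antidiagonal k with a.1 ∈ Set.Ioo 0 k, (-1) ^ a.1 * E a.1 * P a.2 := by
    intro k hk
    have h := congrArg (MvPolynomial.aeval β)
      (MvPolynomial.psum_eq_mul_esymm_sub_sum (Fin (2 * m)) ℂ k hk)
    simpa only [map_sub, map_mul, map_sum, map_pow, map_neg, map_one, map_natCast] using h
  -- final induction
  have main : ∀ k, 1 ≤ k → k ≤ m - 1 → P k = -1 := by
    intro k
    induction k using Nat.strong_induction_on with
    | _ k ih =>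
      intro hk1 hk2
      rw [hNewton k hk1, hE k hk1 hk2]
      have hsum : ∑ a ∈ antidiagonal k with a.1 ∈ Set.Ioo 0 k, (-1 : ℂ) ^ a.1 * E a.1 * P a.2
          = -((k : ℂ) - 1) := by
        have hterm : ∀ a ∈ {a ∈ antidiagonal k | a.1 ∈ Set.Ioo 0 k},
            (-1 : ℂ) ^ a.1 * E a.1 * P a.2 = -1 := by
          intro a ha
          simp only [Finset.mem_filter, Finset.HasAntidiagonal.mem_antidiagonal, Set.mem_Ioo] at ha
          obtain ⟨hak, h0, hlt⟩ := ha
          rw [hE a.1 (by omega) (by omega), ih a.2 (by omega) (by omega) (by omega),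
            ← pow_add, Even.neg_one_pow ⟨a.1, rfl⟩]
          ring
        rw [Finset.sum_congr rfl hterm, Finset.sum_const]
        have hcard : #{a ∈ antidiagonal k | a.1 ∈ Set.Ioo 0 k} = k - 1 := by
          have hset : {a ∈ antidiagonal k | a.1 ∈ Set.Ioo 0 k}
              = (Finset.Ioo 0 k).map ⟨fun i => (i, k - i),
                  fun a b h => by simpa using congrArg Prod.fst h⟩ := by
            ext ⟨x, y⟩
            simp only [Finset.mem_filter, Finset.HasAntidiagonal.mem_antidiagonal, Set.mem_Ioo, Finset.mem_map,
              Finset.mem_Ioo, Function.Embedding.coeFn_mk, Prod.mk.injEq]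
            constructor
            · rintro ⟨h1, h2, h3⟩
              exact ⟨x, ⟨h2, h3⟩, Prod.ext rfl (show k - x = y by omega)⟩
            · rintro ⟨i, ⟨h1, h2⟩, rfl, rfl⟩
              exact ⟨by omega, h1, h2⟩
          rw [hset, Finset.card_map, Nat.card_Ioo]
          omega
        rw [hcard, nsmul_eq_mul]
        push_cast [Nat.cast_sub hk1]
        ring
      rw [hsum]
      have : ((-1 : ℂ)) ^ (k + 1) * (k : ℂ) * (-1) ^ k = -(k : ℂ) := by
        rw [mul_comm, ← mul_assoc, ← pow_add]
        have : ((-1 : ℂ)) ^ (k + (k + 1)) = -1 := by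
          rw [Odd.neg_one_pow ⟨k, by ring⟩]
        rw [this]; ring
      rw [this]; ring
  intro k hk1 hk2
  rw [← hP k]
  exact main k hk1 hk2
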